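/- Ky Fan's theorem (trace minimization form): Let L be a symmetric n×n real matrix with eigenvalues λ₁ ≤ λ₂ ≤ … ≤ λₙ. Then the minimum of Tr(Fᵀ L F) over all n×c real matrices F with FᵀF = I_c equals λ₁ + λ₂ + … + λ_c. -/

import Mathlib

open Matrix BigOperators Polynomial

lemma charpoly_conj {R : Type*} [CommRing R] {m : Type*} [DecidableEq m] [Fintype m]
    (U A V : Matrix m m R) (h1 : U * V = 1) :
    (U * A * V).charpoly = A.charpoly := by
  have hmap : ∀ M N : Matrix m m R, (M * N).map (C : R →+* R[X]) = M.map C * N.map C :=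
    fun M N => Matrix.map_mul
  have hchar : (U * A * V).charmatrix = U.map C * A.charmatrix * V.map C := by
    unfold Matrix.charmatrix
    rw [RingHom.mapMatrix_apply, RingHom.mapMatrix_apply, hmap, hmap, mul_sub, sub_mul]
    congr 1
    rw [mul_assoc, (Matrix.scalar_commute (X : R[X]) (fun r => (Commute.all _ _)) _).eq,
      ← mul_assoc, ← hmap, h1]
    simp
  unfold Matrix.charpoly
  rw [hchar, det_mul, det_mul, mul_comm, ← mul_assoc, ← det_mul, ← hmap,
    mul_eq_one_comm.mp h1]
  simp

lemma charpoly_diag {R : Type*} [CommRing R] {n : ℕ} (d : Fin n → R) :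
    (Matrix.diagonal d).charpoly = ∏ i, (X - C (d i)) := by
  rw [Matrix.charpoly_of_upperTriangular _ (Matrix.blockTriangular_diagonal d)]
  simp

lemma monotone_eq_of_multiset {n : ℕ} {f g : Fin n → ℝ} (hf : Monotone f) (hg : Monotone g)
    (h : Multiset.map f Finset.univ.val = Multiset.map g Finset.univ.val) : f = g := by
  apply List.ofFn_injective
  apply List.Perm.eq_of_sortedLE hf.sortedLE_ofFn hg.sortedLE_ofFn
  rw [← Multiset.coe_eq_coe]
  simpa [List.ofFn_eq_map, ← Multiset.map_coe, Fin.univ_def] using h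

lemma map_castLEEmb {n c : ℕ} (hcn : c ≤ n) :
    (Finset.univ.map (Fin.castLEEmb hcn)) = Finset.univ.filter (fun i : Fin n => (i : ℕ) < c) := by
  ext i
  simp only [Finset.mem_map, Finset.mem_univ, true_and, Finset.mem_filter, Fin.castLEEmb,
    Function.Embedding.coeFn_mk]
  constructor
  · rintro ⟨j, rfl⟩; exact j.2
  · rintro h; exact ⟨⟨i, h⟩, rfl⟩

lemma sum_castLE {n c : ℕ} (hcn : c ≤ n) (f : Fin n → ℝ) :
    ∑ i : Fin c, f (Fin.castLE hcn i) = ∑ i : Fin n, if (i : ℕ) < c then f i else 0 := by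
  rw [← Finset.sum_filter, ← map_castLEEmb hcn, Finset.sum_map]
  rfl

lemma key_ineq {n c : ℕ} (hc1 : 1 ≤ c) (hcn : c ≤ n) (μ : Fin n → ℝ) (hmono : Monotone μ)
    (s : Fin n → ℝ) (h0 : ∀ i, 0 ≤ s i) (h1 : ∀ i, s i ≤ 1) (hsum : ∑ i, s i = c) :
    ∑ i : Fin c, μ (Fin.castLE hcn i) ≤ ∑ i, μ i * s i := by
  have hcn' : c - 1 < n := by omega
  set m : Fin n := ⟨c - 1, hcn'⟩ with hm
  have key : ∀ i : Fin n, (if (i : ℕ) < c then μ i - μ m else 0) ≤ (μ i - μ m) * s i := by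
    intro i
    by_cases h : (i : ℕ) < c
    · have him : μ i ≤ μ m := hmono (by simp [hm, Fin.le_def]; omega)
      simp only [if_pos h]
      nlinarith [h0 i, h1 i]
    · have him : μ m ≤ μ i := hmono (by simp [hm, Fin.le_def]; omega)
      simp only [if_neg h]
      nlinarith [h0 i]
  have hsum2 := Finset.sum_le_sum (fun i (_ : i ∈ Finset.univ) => key i)
  have e1 : ∑ i : Fin n, (if (i : ℕ) < c then μ i - μ m else 0)
      = (∑ i : Fin c, μ (Fin.castLE hcn i)) - c * μ m := by
    rw [sum_castLE hcn]
    have h2 : ∀ i : Fin n, (if (i : ℕ) < c then μ i - μ m else 0)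
        = (if (i : ℕ) < c then μ i else 0) - (if (i : ℕ) < c then μ m else 0) := by
      intro i; split <;> simp
    rw [Finset.sum_congr rfl (fun i _ => h2 i), Finset.sum_sub_distrib]
    have h3 : ∑ i : Fin n, (if (i : ℕ) < c then μ m else 0) = c * μ m := by
      rw [← Finset.sum_filter, ← map_castLEEmb hcn, Finset.sum_const]
      simp [mul_comm]
    rw [h3]
  have e2 : ∑ i : Fin n, (μ i - μ m) * s i = (∑ i, μ i * s i) - μ m * c := by
    simp only [sub_mul, Finset.sum_sub_distrib, ← Finset.mul_sum, hsum]
  rw [e1, e2] at hsum2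
  linarith

lemma exists_orth_diag {n : ℕ} (L : Matrix (Fin n) (Fin n) ℝ) (hsymm : Lᵀ = L)
    (μ : Fin n → ℝ) (hmono : Monotone μ)
    (hchar : L.charpoly = ∏ i, (Polynomial.X - Polynomial.C (μ i))) :
    ∃ V : Matrix (Fin n) (Fin n) ℝ,
      Vᵀ * V = 1 ∧ V * Vᵀ = 1 ∧ L = V * Matrix.diagonal μ * Vᵀ := by
  have hA : L.IsHermitian := by
    rw [Matrix.IsHermitian, Matrix.conjTranspose_eq_transpose_of_trivial]; exact hsymm
  set e := hA.eigenvalues with he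
  set U := (hA.eigenvectorUnitary : Matrix (Fin n) (Fin n) ℝ) with hU
  have hstar : star U = Uᵀ := Matrix.conjTranspose_eq_transpose_of_trivial U
  have hU1 : Uᵀ * U = 1 := by
    rw [← hstar]; exact Matrix.mem_unitaryGroup_iff'.mp hA.eigenvectorUnitary.2
  have hU2 : U * Uᵀ = 1 := by
    rw [← hstar]; exact Matrix.mem_unitaryGroup_iff.mp hA.eigenvectorUnitary.2
  have hspec : L = U * Matrix.diagonal e * Uᵀ := by
    have := hA.spectral_theorem
    rw [Unitary.conjStarAlgAut_apply, hstar] at this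
    convert this using 3 <;> rfl
  set σ : Equiv.Perm (Fin n) := Tuple.sort e with hσ
  have hcp : L.charpoly = ∏ i, (X - C (e i)) := by
    rw [hspec, charpoly_conj _ _ _ hU2, charpoly_diag]
  have hms : Multiset.map e Finset.univ.val = Multiset.map μ Finset.univ.val := by
    have h := hcp.symm.trans hchar
    have hre : ∀ f : Fin n → ℝ, (∏ i, (X - C (f i))) =
        ((Multiset.map f Finset.univ.val).map fun a => X - C a).prod := by
      intro f
      rw [Multiset.map_map, Finset.prod_eq_multiset_prod]
      rfl
    rw [hre e, hre μ] at h
    have := congrArg Polynomial.roots h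
    rwa [Polynomial.roots_multiset_prod_X_sub_C, Polynomial.roots_multiset_prod_X_sub_C] at this
  have h1 : Multiset.map (⇑σ) Finset.univ.val = Finset.univ.val :=
    congrArg Finset.val (Finset.map_univ_equiv σ)
  have hperm : Multiset.map (e ∘ σ) Finset.univ.val = Multiset.map e Finset.univ.val := by
    conv_rhs => rw [← h1]
    rw [Multiset.map_map]
  have heq : e ∘ σ = μ :=
    monotone_eq_of_multiset (Tuple.monotone_sort e) hmono (hperm.trans hms)
  refine ⟨U.submatrix id σ, ?_, ?_, ?_⟩
  · rw [transpose_submatrix, ← Matrix.submatrix_mul _ _ _ id _ Function.bijective_id, hU1,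
      Matrix.submatrix_one _ σ.injective]
  · rw [transpose_submatrix, submatrix_mul_equiv _ _ _ σ, hU2, Matrix.submatrix_id_id]
  · rw [← heq, ← Matrix.submatrix_diagonal e σ σ.injective, transpose_submatrix,
      submatrix_mul_equiv _ _ _ σ, submatrix_mul_equiv _ _ _ σ, Matrix.submatrix_id_id]
    exact hspec

/-- Ky Fan's theorem (trace-minimization form): if `L` is symmetric with eigenvalues
`μ 0 ≤ μ 1 ≤ … ≤ μ (n-1)` (with multiplicity, encoded via the characteristic polynomial),
then the minimum of `Tr(Fᵀ L F)` over `F` with `FᵀF = I` is `μ 0 + … + μ (c-1)`. -/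
theorem stmt10 {n c : ℕ} (hc1 : 1 ≤ c) (hcn : c ≤ n)
    (L : Matrix (Fin n) (Fin n) ℝ) (hsymm : Lᵀ = L)
    (μ : Fin n → ℝ) (hmono : Monotone μ)
    (hchar : L.charpoly = ∏ i, (Polynomial.X - Polynomial.C (μ i))) :
    IsLeast
      {x : ℝ | ∃ F : Matrix (Fin n) (Fin c) ℝ, Fᵀ * F = 1 ∧ x = (Fᵀ * L * F).trace}
      (∑ i : Fin c, μ (Fin.castLE hcn i)) := by
  obtain ⟨V, hV1, hV2, hL⟩ := exists_orth_diag L hsymm μ hmono hchar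
  constructor
  · -- membership
    refine ⟨V.submatrix id (Fin.castLE hcn), ?_, ?_⟩
    · rw [transpose_submatrix, ← Matrix.submatrix_mul _ _ _ id _ Function.bijective_id, hV1,
        Matrix.submatrix_one _ (Fin.castLE_injective hcn)]
    · have hd : Vᵀ * L * V = Matrix.diagonal μ := by
        rw [hL, show Vᵀ * (V * Matrix.diagonal μ * Vᵀ) * V
            = (Vᵀ * V) * Matrix.diagonal μ * (Vᵀ * V) by noncomm_ring, hV1, one_mul, mul_one]
      rw [transpose_submatrix,
        show L = L.submatrix id id from rfl,
        ← Matrix.submatrix_mul _ _ _ id _ Function.bijective_id,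
        ← Matrix.submatrix_mul _ _ _ id _ Function.bijective_id,
        hd]
      simp [Matrix.trace, Matrix.diag]
  · -- lower bound
    rintro x ⟨F, hF, rfl⟩
    set G := Vᵀ * F with hG
    have hGG : Gᵀ * G = 1 := by
      rw [hG, Matrix.transpose_mul, Matrix.transpose_transpose,
        show Fᵀ * V * (Vᵀ * F) = Fᵀ * (V * Vᵀ) * F by simp only [Matrix.mul_assoc], hV2,
        Matrix.mul_one, hF]
    set s : Fin n → ℝ := fun i => ∑ j, (G i j)^2 with hs
    have h0 : ∀ i, 0 ≤ s i := fun i => Finset.sum_nonneg fun j _ => sq_nonneg _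
    have hsumc : ∑ i, s i = c := by
      have ht : (Gᵀ * G).trace = ∑ j, ∑ i, (G i j)^2 := by
        simp [Matrix.trace, Matrix.diag, Matrix.mul_apply, sq]
      rw [hGG, Matrix.trace_one] at ht
      rw [hs, Finset.sum_comm, ← ht]
      simp
    have h1 : ∀ i, s i ≤ 1 := by
      intro i
      set M := G * Gᵀ with hM
      have hMsymm : Mᵀ = M := by rw [hM, Matrix.transpose_mul, Matrix.transpose_transpose]
      have hMM : M * M = M := by
        rw [hM, show (G * Gᵀ) * (G * Gᵀ) = G * (Gᵀ * G) * Gᵀ by simp only [Matrix.mul_assoc],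
          hGG, Matrix.mul_one]
      have hdiag : M i i = s i := by simp [hM, Matrix.mul_apply, hs, sq]
      have h2 : s i = ∑ k, (M i k)^2 := by
        conv_lhs => rw [← hdiag, ← hMM]
        rw [Matrix.mul_apply]
        refine Finset.sum_congr rfl fun k _ => ?_
        have hki : M k i = M i k := congrFun (congrFun hMsymm i) k
        rw [hki, sq]
      have h3 : (s i)^2 ≤ s i := by
        conv_rhs => rw [h2]
        rw [← hdiag]
        exact Finset.single_le_sum (f := fun k => (M i k)^2) (fun k _ => sq_nonneg _)
          (Finset.mem_univ i)
      nlinarith [h0 i]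
    have htr : (Fᵀ * L * F).trace = ∑ i, μ i * s i := by
      have hFLF : Fᵀ * L * F = Gᵀ * Matrix.diagonal μ * G := by
        rw [hG, Matrix.transpose_mul, Matrix.transpose_transpose, hL]
        simp only [Matrix.mul_assoc]
      rw [hFLF, Matrix.trace]
      simp only [Matrix.diag, Matrix.mul_apply, Matrix.mul_diagonal, Matrix.transpose_apply]
      rw [Finset.sum_comm]
      refine Finset.sum_congr rfl fun i _ => ?_
      rw [hs, Finset.mul_sum]
      refine Finset.sum_congr rfl fun j _ => ?_
      rw [Finset.sum_eq_single i (fun b _ hb => by simp [Matrix.diagonal_apply_ne _ hb])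
        (by simp), Matrix.diagonal_apply_eq]
      ring
    rw [htr]
    exact key_ineq hc1 hcn μ hmono s h0 h1 hsumc
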